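/- Let m ≥ 1, let α_1, …, α_m ∈ ℂ be nonzero, and let ℓ ≥ 1 be an integer such that α_1^ℓ, …, α_m^ℓ are pairwise distinct. Let g_1, …, g_m ∈ ℂ[X], let d_1, …, d_m ∈ ℕ with deg g_i ≤ d_i for each i, and set k := Σ_{i=1}^m (d_i + 1). If for some A ∈ ℕ we have Σ_{i=1}^m g_i(A + jℓ) · α_i^{A+jℓ} = 0 for every j ∈ {0, 1, …, k−1}, then g_i = 0 for every i. -/

import Mathlib

open Polynomial Finset

private lemma aux_nd : ((X : ℂ[X]) + C 1).natDegree = 1 := natDegree_X_add_C 1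

private lemma aux_nd' : ((X : ℂ[X]) + C 1).natDegree ≠ 0 := by rw [aux_nd]; omega

private lemma aux_lcq : ((X : ℂ[X]) + C 1).leadingCoeff = 1 := (monic_X_add_C (1 : ℂ)).leadingCoeff

private lemma aux_const {p : ℂ[X]} (h : p.comp (X + C 1) = p) : p.natDegree = 0 := by
  have key : ∀ x : ℂ, p.eval (x + 1) = p.eval x := by
    intro x
    conv_rhs => rw [← h]
    simp [eval_comp]
  have hn : ∀ n : ℕ, p.eval (n : ℂ) = p.eval 0 := by
    intro n
    induction n with
    | zero => simp
    | succ n ih => push_cast; rw [key]; exact ih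
  have h0 : p - C (p.eval 0) = 0 := by
    apply eq_zero_of_infinite_isRoot
    apply (Set.infinite_range_of_injective (f := ((↑) : ℕ → ℂ)) Nat.cast_injective).mono
    rintro x ⟨n, rfl⟩
    simp [IsRoot, hn n]
  have : p = C (p.eval 0) := sub_eq_zero.mp h0
  rw [this, natDegree_C]

private lemma aux_pprime_zero {βi β0 : ℂ} (hne : βi ≠ β0) {p : ℂ[X]}
    (h : C βi * p.comp (X + C 1) - C β0 * p = 0) : p = 0 := by
  by_contra hp
  have hcomp : (p.comp (X + C 1)).leadingCoeff = p.leadingCoeff := by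
    rw [leadingCoeff_comp aux_nd', aux_lcq, one_pow, mul_one]
  have heq := congrArg leadingCoeff (sub_eq_zero.mp h)
  rw [leadingCoeff_mul, leadingCoeff_mul, leadingCoeff_C, leadingCoeff_C, hcomp] at heq
  have hz : (βi - β0) * p.leadingCoeff = 0 := by linear_combination heq
  rcases mul_eq_zero.mp hz with h' | h'
  · exact hne (sub_eq_zero.mp h')
  · exact hp (leadingCoeff_eq_zero.mp h')

private lemma aux_deg_le (a b : ℂ) (p : ℂ[X]) :
    (C a * p.comp (X + C 1) - C b * p).natDegree ≤ p.natDegree := by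
  apply le_trans (natDegree_sub_le _ _)
  apply max_le
  · exact le_trans (natDegree_C_mul_le _ _) (by rw [natDegree_comp, aux_nd, mul_one])
  · exact natDegree_C_mul_le _ _

private lemma aux_deg_lt {p : ℂ[X]} (hp : 1 ≤ p.natDegree) (b : ℂ) :
    (C b * (p.comp (X + C 1) - p)).natDegree < p.natDegree := by
  refine lt_of_le_of_lt (natDegree_C_mul_le _ _) ?_
  have hp0 : p ≠ 0 := fun h => by simp [h] at hp
  have hlc : (p.comp (X + C 1)).leadingCoeff = p.leadingCoeff := by
    rw [leadingCoeff_comp aux_nd', aux_lcq, one_pow, mul_one]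
  by_cases h : p.comp (X + C 1) - p = 0
  · rw [h]; simpa using (by omega : 0 < p.natDegree)
  · have h1 : p.comp (X + C 1) ≠ 0 := fun hc => by
      apply hp0
      apply leadingCoeff_eq_zero.mp
      rw [← hlc, hc, leadingCoeff_zero]
    refine natDegree_lt_natDegree h ?_
    have hdeq : (p.comp (X + C 1)).degree = p.degree := by
      rw [degree_eq_natDegree h1, degree_eq_natDegree hp0, natDegree_comp, aux_nd, mul_one]
    have := degree_sub_lt hdeq h1 hlc
    rwa [hdeq] at this

private lemma aux_shift {ι : Type*} (s : Finset ι) (β : ι → ℂ) (p : ι → ℂ[X]) (b : ℂ) (j : ℕ)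
    (h1 : ∑ t ∈ s, (p t).eval ((j : ℕ) : ℂ) * β t ^ j = 0)
    (h2 : ∑ t ∈ s, (p t).eval (((j + 1 : ℕ)) : ℂ) * β t ^ (j + 1) = 0) :
    ∑ t ∈ s, (C (β t) * (p t).comp (X + C 1) - C b * p t).eval ((j : ℕ) : ℂ) * β t ^ j = 0 := by
  have expand : ∀ t ∈ s, (C (β t) * (p t).comp (X + C 1) - C b * p t).eval ((j : ℕ) : ℂ) * β t ^ j
      = (p t).eval (((j + 1 : ℕ)) : ℂ) * β t ^ (j + 1) - b * ((p t).eval ((j : ℕ) : ℂ) * β t ^ j) := by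
    intro t _
    simp only [eval_sub, eval_mul, eval_C, eval_comp, eval_add, eval_X, eval_one]
    push_cast
    ring
  rw [Finset.sum_congr rfl expand, Finset.sum_sub_distrib, h2, ← Finset.mul_sum, h1,
    mul_zero, sub_zero]

private lemma core {ι : Type*} [DecidableEq ι] (N : ℕ) :
    ∀ (s : Finset ι) (β : ι → ℂ) (p : ι → ℂ[X]),
    (∀ i ∈ s, β i ≠ 0) → (Set.InjOn β s) →
    (∑ i ∈ s, ((p i).natDegree + 1)) = N →
    (∀ j, j < N → ∑ i ∈ s, (p i).eval ((j : ℕ) : ℂ) * β i ^ j = 0) →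
    ∀ i ∈ s, p i = 0 := by
  induction N using Nat.strong_induction_on with
  | _ N IH =>
    intro s β p hβ hinj hN hvan i hi
    by_cases hex : ∃ t ∈ s, 1 ≤ (p t).natDegree
    · -- Case B: some polynomial has positive degree
      obtain ⟨i₀, hi₀, hd⟩ := hex
      set p' : ι → ℂ[X] := fun t => C (β t) * (p t).comp (X + C 1) - C (β i₀) * p t with hp'
      have hde : ∀ t ∈ s, (p' t).natDegree + 1 ≤ (p t).natDegree + 1 := fun t _ => by
        simpa [hp'] using aux_deg_le (β t) (β i₀) (p t)
      have hd0 : (p' i₀).natDegree + 1 ≤ (p i₀).natDegree := by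
        have heq : p' i₀ = C (β i₀) * ((p i₀).comp (X + C 1) - p i₀) := by
          simp only [hp']; ring
        rw [heq]
        exact aux_deg_lt hd (β i₀)
      have hNlt : (∑ t ∈ s, ((p' t).natDegree + 1)) < N := by
        rw [← hN]
        exact Finset.sum_lt_sum hde ⟨i₀, hi₀, by omega⟩
      have hvan' : ∀ j, j < (∑ t ∈ s, ((p' t).natDegree + 1)) →
          ∑ t ∈ s, (p' t).eval ((j : ℕ) : ℂ) * β t ^ j = 0 := by
        intro j hj
        exact aux_shift s β p (β i₀) j (hvan j (by omega)) (hvan (j + 1) (by omega))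
      have hall := IH _ hNlt s β p' hβ hinj rfl hvan'
      have hz := hall i₀ hi₀
      exfalso
      have hsub : (p i₀).comp (X + C 1) - p i₀ = 0 := by
        have hC : C (β i₀) * ((p i₀).comp (X + C 1) - p i₀) = 0 := by
          rw [← hz]; simp only [hp']; ring
        rcases mul_eq_zero.mp hC with h' | h'
        · exact absurd (C_eq_zero.mp h') (hβ i₀ hi₀)
        · exact h'
      have := aux_const (sub_eq_zero.mp hsub)
      omega
    · -- Case A: all polynomials constant
      push_neg at hex
      have hdi : (p i).natDegree = 0 := by have := hex i hi; omega
      have hconst : p i = C ((p i).coeff 0) := eq_C_of_natDegree_eq_zero hdi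
      set p' : ι → ℂ[X] := fun t => C (β t) * (p t).comp (X + C 1) - C (β i) * p t with hp'
      have hpi' : p' i = 0 := by
        simp only [hp']
        rw [hconst, C_comp]
        ring
      have hsum : (p i).natDegree + 1 + ∑ t ∈ s.erase i, ((p t).natDegree + 1) = N := by
        rw [← hN]; exact Finset.add_sum_erase s (fun t => (p t).natDegree + 1) hi
      have hNle : (∑ t ∈ s.erase i, ((p' t).natDegree + 1)) ≤
          ∑ t ∈ s.erase i, ((p t).natDegree + 1) :=
        Finset.sum_le_sum (fun t _ => by simpa [hp'] using aux_deg_le (β t) (β i) (p t))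
      have hNlt : (∑ t ∈ s.erase i, ((p' t).natDegree + 1)) < N := by omega
      have hvan' : ∀ j, j < (∑ t ∈ s.erase i, ((p' t).natDegree + 1)) →
          ∑ t ∈ s.erase i, (p' t).eval ((j : ℕ) : ℂ) * β t ^ j = 0 := by
        intro j hj
        have hSs : ∑ t ∈ s.erase i, (p' t).eval ((j : ℕ) : ℂ) * β t ^ j
            = ∑ t ∈ s, (p' t).eval ((j : ℕ) : ℂ) * β t ^ j := by
          apply Finset.sum_erase
          rw [hpi']
          simp
        rw [hSs]
        exact aux_shift s β p (β i) j (hvan j (by omega)) (hvan (j + 1) (by omega))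
      have hall := IH _ hNlt (s.erase i) β p'
        (fun t ht => hβ t (Finset.mem_of_mem_erase ht))
        (hinj.mono (fun t ht => Finset.mem_of_mem_erase ht)) rfl hvan'
      have hzero : ∀ t ∈ s.erase i, p t = 0 := by
        intro t ht
        have hne : β t ≠ β i := fun h =>
          (Finset.ne_of_mem_erase ht) (hinj (Finset.mem_of_mem_erase ht) hi h)
        exact aux_pprime_zero hne (hall t ht)
      have h0 := hvan 0 (by omega)
      rw [← Finset.add_sum_erase _ _ hi] at h0
      have hrest : ∀ t ∈ s.erase i, (p t).eval ((0 : ℕ) : ℂ) * β t ^ 0 = 0 := fun t ht => by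
        rw [hzero t ht]; simp
      rw [Finset.sum_eq_zero hrest] at h0
      simp only [Nat.cast_zero, pow_zero, mul_one, add_zero] at h0
      rw [hconst, coeff_zero_eq_eval_zero, h0, map_zero]

theorem stmt6 (m : ℕ) (hm : 1 ≤ m) (α : Fin m → ℂ) (hα : ∀ i, α i ≠ 0)
    (ℓ : ℕ) (hℓ : 1 ≤ ℓ) (hdist : Function.Injective fun i => α i ^ ℓ)
    (g : Fin m → Polynomial ℂ) (d : Fin m → ℕ) (hdeg : ∀ i, (g i).natDegree ≤ d i)
    (k : ℕ) (hk : k = ∑ i, (d i + 1)) (A : ℕ)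
    (hvan : ∀ j < k, ∑ i, (g i).eval (((A + j * ℓ : ℕ) : ℂ)) * α i ^ (A + j * ℓ) = 0) :
    ∀ i, g i = 0 := by
  have hℓ0 : (ℓ : ℂ) ≠ 0 := Nat.cast_ne_zero.mpr (by omega)
  set q : ℂ[X] := C (ℓ : ℂ) * X + C (A : ℂ) with hq
  have hqdeg : q.natDegree = 1 := natDegree_linear hℓ0
  set h : Fin m → ℂ[X] := fun t => C (α t ^ A) * (g t).comp q with hh
  have hhd : ∀ t, (h t).natDegree ≤ d t := by
    intro t
    refine le_trans (natDegree_C_mul_le _ _) ?_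
    rw [natDegree_comp, hqdeg, mul_one]
    exact hdeg t
  have hNk : (∑ t, ((h t).natDegree + 1)) ≤ k := by
    rw [hk]
    exact Finset.sum_le_sum (fun t _ => by have := hhd t; omega)
  have hcore := core (∑ t, ((h t).natDegree + 1)) Finset.univ (fun t => α t ^ ℓ) h
    (fun t _ => pow_ne_zero _ (hα t)) (hdist.injOn) rfl
    (by
      intro j hj
      have hv := hvan j (by omega)
      rw [← hv]
      apply Finset.sum_congr rfl
      intro t _
      simp only [hh, hq, eval_mul, eval_C, eval_comp, eval_add, eval_X]
      rw [← pow_mul, show ((A + j * ℓ : ℕ) : ℂ) = (ℓ : ℂ) * j + A from by push_cast; ring,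
        show A + j * ℓ = A + ℓ * j from by ring, pow_add]
      ring)
  intro i
  have hz := hcore i (Finset.mem_univ i)
  have hC : (C (α i ^ A) : ℂ[X]) ≠ 0 := by
    simpa using pow_ne_zero A (hα i)
  have hcomp0 : (g i).comp q = 0 := by
    rcases mul_eq_zero.mp hz with h' | h'
    · exact absurd h' hC
    · exact h'
  by_contra hg
  have hlc : ((g i).comp q).leadingCoeff ≠ 0 := by
    rw [leadingCoeff_comp (by rw [hqdeg]; omega)]
    apply mul_ne_zero (leadingCoeff_ne_zero.mpr hg)
    apply pow_ne_zero
    rw [leadingCoeff_linear hℓ0]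
    exact hℓ0
  rw [hcomp0, leadingCoeff_zero] at hlc
  exact hlc rfl
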